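/- In the affine Weyl group W_aff = Q^∨ ⋊ W_0 of a reduced root system Σ_0, for w = e^μ · w_fin (with μ ∈ Q^∨ and w_fin ∈ W_0), the length of w is l(w) = Σ_{a > 0, w_fin^{-1}(a) > 0} |⟨μ, a⟩| + Σ_{a > 0, w_fin^{-1}(a) < 0} |⟨μ, a⟩ − 1|, the sums running over positive roots a ∈ Σ_0. -/

import Mathlib

/-- The length of an element `g` of the affine Weyl group, realized as a permutation of the
vector space `V`: the number of affine roots `α = a + k` (with `a ∈ Σ₀ = pos ∪ (-pos)` and
`k ∈ ℤ`) which are positive on the fundamental alcove `C` and whose transform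
`g(α) = α ∘ g⁻¹` is negative on `C`. -/
noncomputable def affineLength {V : Type*} [AddCommGroup V] [Module ℝ V]
    (pos : Finset (Module.Dual ℝ V)) (C : Set V) (g : Equiv.Perm V) : ℕ :=
  Set.ncard {p : Module.Dual ℝ V × ℤ |
    (p.1 ∈ pos ∨ -p.1 ∈ pos) ∧
    (∀ x ∈ C, 0 < p.1 x + (p.2 : ℝ)) ∧
    (∀ x ∈ C, p.1 (g⁻¹ x) + (p.2 : ℝ) < 0)}

private lemma toNat_add_toNat_neg_real (m : ℤ) :
    ((m.toNat : ℝ) + ((-m).toNat : ℝ)) = |(m : ℝ)| := by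
  have h : ((m.toNat : ℤ) + ((-m).toNat : ℤ)) = (m.natAbs : ℤ) := by omega
  have h2 := congrArg (fun z : ℤ => (z : ℝ)) h
  push_cast at h2
  linarith

open scoped Classical in
/-- In the affine Weyl group `W_aff = Q^∨ ⋊ W₀` of a reduced root system
`Σ₀`, for `w = e^μ · w_fin` (with `μ ∈ Q^∨` and `w_fin ∈ W₀`, realized as the linear
automorphism `g` of `V` permuting the roots), the length of `w` is
`l(w) = Σ_{a > 0, w_fin⁻¹(a) > 0} |⟨μ, a⟩| + Σ_{a > 0, w_fin⁻¹(a) < 0} |⟨μ, a⟩ − 1|`,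
the sums running over the positive roots `a ∈ Σ₀` (here `w_fin⁻¹(a) = a ∘ g`, and
`w_fin⁻¹(a) > 0` means `a ∘ g` is a positive root). -/
theorem length_formula_semidirect
    {V : Type*} [AddCommGroup V] [Module ℝ V]
    (pos : Finset (Module.Dual ℝ V)) (C : Set V)
    (hC : C.Nonempty)
    (hCpos : ∀ a ∈ pos, ∀ x ∈ C, 0 < a x ∧ a x < 1)
    (τ : V → Equiv.Perm V) (hτ : ∀ ν x, τ ν x = x + ν)
    (μ : V)
    (hμint : ∀ a : Module.Dual ℝ V, (a ∈ pos ∨ -a ∈ pos) → ∃ n : ℤ, a μ = n)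
    (g : V ≃ₗ[ℝ] V)
    (hg : ∀ a : Module.Dual ℝ V, (a ∈ pos ∨ -a ∈ pos) →
      (a ∘ₗ (g : V →ₗ[ℝ] V) ∈ pos ∨ -(a ∘ₗ (g : V →ₗ[ℝ] V)) ∈ pos)) :
    (affineLength pos C (τ μ * g.toEquiv) : ℝ) =
      ∑ a ∈ pos, (if a ∘ₗ (g : V →ₗ[ℝ] V) ∈ pos then |a μ| else |a μ - 1|) := by
  classical
  obtain ⟨x₀, hx₀⟩ := hC
  set e : Module.Dual ℝ V → Module.Dual ℝ V := fun a => a ∘ₗ (g : V →ₗ[ℝ] V) with he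
  set e' : Module.Dual ℝ V → Module.Dual ℝ V :=
    fun a => a ∘ₗ (g.symm : V →ₗ[ℝ] V) with he'
  have hee' : ∀ a, e (e' a) = a := by
    intro a; ext x; simp [he, he']
  have he'e : ∀ a, e' (e a) = a := by
    intro a; ext x; simp [he, he']
  have heinj : Function.Injective e := by
    intro a b h
    have h2 := congrArg e' h
    rwa [he'e, he'e] at h2
  have heneg : ∀ a, e (-a) = -(e a) := by
    intro a; ext x; simp [he]
  have he'neg : ∀ a, e' (-a) = -(e' a) := by
    intro a; ext x; simp [he']
  set R : Finset (Module.Dual ℝ V) := pos ∪ pos.image (fun a => -a) with hRdef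
  have hmemR : ∀ a, a ∈ R ↔ (a ∈ pos ∨ -a ∈ pos) := by
    intro a
    simp only [hRdef, Finset.mem_union, Finset.mem_image]
    constructor
    · rintro (h | ⟨b, hb, rfl⟩)
      · exact Or.inl h
      · right; simpa using hb
    · rintro (h | h)
      · exact Or.inl h
      · exact Or.inr ⟨-a, h, by simp⟩
  have hexcl : ∀ a ∈ pos, -a ∉ pos := by
    intro a ha hna
    have h1 := (hCpos a ha x₀ hx₀).1
    have h2 := (hCpos (-a) hna x₀ hx₀).1
    rw [LinearMap.neg_apply] at h2
    linarith
  have heR : ∀ a ∈ R, e a ∈ R := by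
    intro a ha
    exact (hmemR _).2 (hg a ((hmemR a).1 ha))
  have himg : R.image e = R := by
    apply Finset.eq_of_subset_of_card_le
    · intro b hb
      obtain ⟨a, ha, rfl⟩ := Finset.mem_image.1 hb
      exact heR a ha
    · rw [Finset.card_image_of_injective _ heinj]
  have he'R : ∀ a ∈ R, e' a ∈ R := by
    intro a ha
    rw [← himg] at ha
    obtain ⟨b, hb, rfl⟩ := Finset.mem_image.1 ha
    rwa [he'e]
  set n : Module.Dual ℝ V → ℤ := fun c => ⌊c μ⌋ with hndef
  have hn : ∀ c ∈ R, (n c : ℝ) = c μ := by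
    intro c hc
    obtain ⟨m, hm⟩ := hμint c ((hmemR c).1 hc)
    simp only [hndef, hm, Int.floor_intCast]
  set lo : Module.Dual ℝ V → ℤ := fun a => if a ∈ pos then 0 else 1 with hlodef
  set hi : Module.Dual ℝ V → ℤ :=
    fun a => if e' a ∈ pos then n (e' a) - 1 else n (e' a) with hhidef
  have hposC : ∀ c ∈ R, ∀ m : ℤ, (∀ x ∈ C, 0 < c x + (m : ℝ)) ↔ lo c ≤ m := by
    intro c hc m
    rcases (hmemR c).1 hc with h | h
    · simp only [hlodef, if_pos h]
      constructor
      · intro H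
        have h1 := H x₀ hx₀
        have h2 := (hCpos c h x₀ hx₀).2
        have h3 : (-1 : ℝ) < (m : ℝ) := by linarith
        have h4 : (-1 : ℤ) < m := by exact_mod_cast h3
        omega
      · intro hm x hx
        have h1 := (hCpos c h x hx).1
        have h2 : (0 : ℝ) ≤ (m : ℝ) := by exact_mod_cast hm
        linarith
    · have hcn : c ∉ pos := fun hcp => hexcl c hcp h
      simp only [hlodef, if_neg hcn]
      constructor
      · intro H
        have h1 := H x₀ hx₀
        have h2 := (hCpos (-c) h x₀ hx₀).1
        rw [LinearMap.neg_apply] at h2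
        have h3 : (0 : ℝ) < (m : ℝ) := by linarith
        have h4 : (0 : ℤ) < m := by exact_mod_cast h3
        omega
      · intro hm x hx
        have h2 := (hCpos (-c) h x hx).2
        rw [LinearMap.neg_apply] at h2
        have h3 : (1 : ℝ) ≤ (m : ℝ) := by exact_mod_cast hm
        linarith
  have hnegC : ∀ c ∈ R, ∀ m : ℤ, (∀ x ∈ C, c x + (m : ℝ) < 0) ↔
      m ≤ (if c ∈ pos then -1 else 0) := by
    intro c hc m
    rcases (hmemR c).1 hc with h | h
    · rw [if_pos h]
      constructor
      · intro H
        have h1 := H x₀ hx₀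
        have h2 := (hCpos c h x₀ hx₀).1
        have h3 : (m : ℝ) < 0 := by linarith
        have h4 : m < 0 := by exact_mod_cast h3
        omega
      · intro hm x hx
        have h2 := (hCpos c h x hx).2
        have h3 : (m : ℝ) ≤ -1 := by exact_mod_cast hm
        linarith
    · have hcn : c ∉ pos := fun hcp => hexcl c hcp h
      rw [if_neg hcn]
      constructor
      · intro H
        have h1 := H x₀ hx₀
        have h2 := (hCpos (-c) h x₀ hx₀).2
        rw [LinearMap.neg_apply] at h2
        have h3 : (m : ℝ) < 1 := by linarith
        have h4 : m < 1 := by exact_mod_cast h3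
        omega
      · intro hm x hx
        have h2 := (hCpos (-c) h x hx).1
        rw [LinearMap.neg_apply] at h2
        have h3 : (m : ℝ) ≤ 0 := by exact_mod_cast hm
        linarith
  have hwinv : ∀ x : V, (τ μ * g.toEquiv)⁻¹ x = g.symm (x - μ) := by
    intro x
    have h : (τ μ * g.toEquiv) (g.symm (x - μ)) = x := by
      simp [Equiv.Perm.mul_apply, hτ]
    calc (τ μ * g.toEquiv)⁻¹ x
        = (τ μ * g.toEquiv)⁻¹ ((τ μ * g.toEquiv) (g.symm (x - μ))) := by rw [h]
      _ = g.symm (x - μ) := Equiv.symm_apply_apply _ _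
  have hchar : ∀ p : Module.Dual ℝ V × ℤ,
      ((p.1 ∈ pos ∨ -p.1 ∈ pos) ∧
        (∀ x ∈ C, 0 < p.1 x + (p.2 : ℝ)) ∧
        (∀ x ∈ C, p.1 ((τ μ * g.toEquiv)⁻¹ x) + (p.2 : ℝ) < 0)) ↔
      (p.1 ∈ R ∧ p.2 ∈ Finset.Icc (lo p.1) (hi p.1)) := by
    intro p
    obtain ⟨a, k⟩ := p
    dsimp only
    rw [Finset.mem_Icc]
    constructor
    · rintro ⟨ha0, h1, h2⟩
      have ha := (hmemR a).2 ha0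
      refine ⟨ha, (hposC a ha k).1 h1, ?_⟩
      have hR' := he'R a ha
      have h2' : ∀ x ∈ C, (e' a) x + ((k - n (e' a) : ℤ) : ℝ) < 0 := by
        intro x hx
        have h3 := h2 x hx
        rw [hwinv] at h3
        have hval : a (g.symm (x - μ)) = (e' a) x - (e' a) μ := by
          simp [he', map_sub]
        rw [hval] at h3
        have hnval := hn (e' a) hR'
        push_cast
        rw [hnval]
        linarith
      have h4 := (hnegC (e' a) hR' (k - n (e' a))).1 h2'
      simp only [hhidef]
      by_cases hp : e' a ∈ pos
      · rw [if_pos hp] at h4 ⊢; omega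
      · rw [if_neg hp] at h4 ⊢; omega
    · rintro ⟨ha, hlo, hhi⟩
      refine ⟨(hmemR a).1 ha, (hposC a ha k).2 hlo, ?_⟩
      have hR' := he'R a ha
      have hkey : k - n (e' a) ≤ (if e' a ∈ pos then -1 else 0) := by
        simp only [hhidef] at hhi
        by_cases hp : e' a ∈ pos
        · rw [if_pos hp] at hhi ⊢; omega
        · rw [if_neg hp] at hhi ⊢; omega
      have h2' := (hnegC (e' a) hR' (k - n (e' a))).2 hkey
      intro x hx
      have h3 := h2' x hx
      rw [hwinv]
      have hval : a (g.symm (x - μ)) = (e' a) x - (e' a) μ := by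
        simp [he', map_sub]
      rw [hval]
      have hnval := hn (e' a) hR'
      push_cast at h3
      linarith
  set T : Finset (Module.Dual ℝ V × ℤ) :=
    R.biUnion (fun a => (Finset.Icc (lo a) (hi a)).image (fun k => (a, k))) with hTdef
  have hmemT : ∀ p : Module.Dual ℝ V × ℤ,
      p ∈ T ↔ p.1 ∈ R ∧ p.2 ∈ Finset.Icc (lo p.1) (hi p.1) := by
    intro p
    simp only [hTdef, Finset.mem_biUnion, Finset.mem_image]
    constructor
    · rintro ⟨a, ha, k, hk, rfl⟩
      exact ⟨ha, hk⟩
    · rintro ⟨h1, h2⟩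
      exact ⟨p.1, h1, p.2, h2, rfl⟩
  have hSeq : {p : Module.Dual ℝ V × ℤ |
      (p.1 ∈ pos ∨ -p.1 ∈ pos) ∧
      (∀ x ∈ C, 0 < p.1 x + (p.2 : ℝ)) ∧
      (∀ x ∈ C, p.1 ((τ μ * g.toEquiv)⁻¹ x) + (p.2 : ℝ) < 0)} = ↑T := by
    ext p
    rw [Set.mem_setOf_eq, Finset.mem_coe, hchar p, hmemT p]
  have hlen : affineLength pos C (τ μ * g.toEquiv) = T.card := by
    rw [affineLength, hSeq, Set.ncard_coe_finset]
  have hdisj : ∀ a ∈ R, ∀ b ∈ R, a ≠ b →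
      Disjoint ((Finset.Icc (lo a) (hi a)).image (fun k => (a, k)))
        ((Finset.Icc (lo b) (hi b)).image (fun k => (b, k))) := by
    intro a _ b _ hab
    rw [Finset.disjoint_left]
    rintro p hp hq
    obtain ⟨k, _, rfl⟩ := Finset.mem_image.1 hp
    obtain ⟨l, _, hl⟩ := Finset.mem_image.1 hq
    exact hab (congrArg Prod.fst hl).symm
  have hcard : T.card = ∑ a ∈ R, (hi a + 1 - lo a).toNat := by
    rw [hTdef, Finset.card_biUnion hdisj]
    refine Finset.sum_congr rfl fun a _ => ?_
    rw [Finset.card_image_of_injective _ (fun k l h => congrArg Prod.snd h),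
      Int.card_Icc]
  rw [hlen, hcard, Nat.cast_sum]
  have hreindex : ∑ a ∈ R, ((hi a + 1 - lo a).toNat : ℝ)
      = ∑ b ∈ R, ((hi (e b) + 1 - lo (e b)).toNat : ℝ) := by
    conv_lhs => rw [← himg]
    rw [Finset.sum_image (fun a _ b _ h => heinj h)]
  have hdisjR : Disjoint pos (pos.image (fun a => -a)) := by
    rw [Finset.disjoint_left]
    intro a ha hb
    obtain ⟨b, hb', rfl⟩ := Finset.mem_image.1 hb
    exact hexcl b hb' ha
  rw [hreindex, hRdef, Finset.sum_union hdisjR,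
    Finset.sum_image (fun a _ b _ (h : -a = -b) => neg_injective h),
    ← Finset.sum_add_distrib]
  refine Finset.sum_congr rfl fun b hb => ?_
  have hnegb : -b ∉ pos := hexcl b hb
  have hbR : b ∈ R := (hmemR b).2 (Or.inl hb)
  have hnb : (n b : ℝ) = b μ := hn b hbR
  have hnnegb : n (-b) = -n b := by
    simp only [hndef]
    have h1 : (-b) μ = ((-n b : ℤ) : ℝ) := by
      rw [LinearMap.neg_apply]
      push_cast
      rw [hnb]
    rw [h1, Int.floor_intCast]
  rw [heneg b]
  have hhi1 : hi (e b) = n b - 1 := by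
    simp only [hhidef]
    rw [he'e b, if_pos hb]
  have hhi2 : hi (-(e b)) = -n b := by
    simp only [hhidef]
    rw [he'neg (e b), he'e b, if_neg hnegb, hnnegb]
  have hgb : (b ∘ₗ (g : V →ₗ[ℝ] V)) = e b := by rw [he]
  rw [hgb, hhi1, hhi2]
  by_cases hp : e b ∈ pos
  · have hne : -(e b) ∉ pos := hexcl (e b) hp
    rw [if_pos hp]
    simp only [hlodef, if_pos hp, if_neg hne]
    have key := toNat_add_toNat_neg_real (n b)
    rw [show n b - 1 + 1 - 0 = n b by ring, show -n b + 1 - 1 = -n b by ring, ← hnb]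
    exact key
  · have hR' : e b ∈ R := heR b hbR
    have hnp : -(e b) ∈ pos := by
      rcases (hmemR (e b)).1 hR' with h | h
      · exact absurd h hp
      · exact h
    rw [if_neg hp]
    simp only [hlodef, if_neg hp, if_pos hnp]
    have key := toNat_add_toNat_neg_real (n b - 1)
    push_cast at key
    rw [hnb] at key
    rw [show n b - 1 + 1 - 1 = n b - 1 by ring, show -n b + 1 - 0 = -(n b - 1) by ring]
    exact key
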